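/- Let p be an odd prime, φ the quadratic character of F_p, and χ any multiplicative character of F_p. Then g(φχ̄)·g(χ̄) = g(φ)·χ̄(1/4)·g(χ̄²), i.e., the Hasse–Davenport product relation with m = 2. -/
import Mathlib

open Finset
open scoped Classical

section key

variable {p : ℕ} [Fact p.Prime]

lemma nat_ne_zero_zmod (hp : Odd p) {n : ℕ} (hn : ¬ p ∣ n) : ((n : ZMod p) ≠ 0) := by
  intro h
  rw [ZMod.natCast_eq_zero_iff] at h
  exact hn h

lemma two_ne_zero_zmod (hp : Odd p) : ((2 : ZMod p) ≠ 0) := by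
  have h2 : ((2:ℕ) : ZMod p) ≠ 0 := by
    apply nat_ne_zero_zmod hp
    intro h
    rcases (Nat.prime_dvd_prime_iff_eq Fact.out Nat.prime_two).mp h with rfl
    exact (Nat.not_odd_iff_even.mpr (by norm_num)) hp
  simpa using h2

lemma four_ne_zero_zmod (hp : Odd p) : ((4 : ZMod p) ≠ 0) := by
  have : (4 : ZMod p) = 2 * 2 := by norm_num
  rw [this]
  exact mul_ne_zero (two_ne_zero_zmod hp) (two_ne_zero_zmod hp)

/-- Key Jacobi-sum identity: J(Ψ,Ψ) = Ψ(1/4) * J(Φ,Ψ). -/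
lemma jacobiSum_self_eq (hp : Odd p) {Ψ : MulChar (ZMod p) ℂ} (hΨ : Ψ ≠ 1) :
    jacobiSum Ψ Ψ =
      Ψ ((4 : ZMod p)⁻¹) *
        jacobiSum ((quadraticChar (ZMod p)).ringHomComp (Int.castRingHom ℂ)) Ψ := by
  set Φ : MulChar (ZMod p) ℂ := (quadraticChar (ZMod p)).ringHomComp (Int.castRingHom ℂ) with hΦdef
  have h2 : (2 : ZMod p) ≠ 0 := two_ne_zero_zmod hp
  have h4 : (4 : ZMod p) ≠ 0 := four_ne_zero_zmod hp
  have hF2 : ringChar (ZMod p) ≠ 2 := by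
    rw [ZMod.ringChar_zmod_n]
    intro h
    subst h
    exact (Nat.not_odd_iff_even.mpr (by norm_num)) hp
  have h4' : (4 : ZMod p)⁻¹ = 2⁻¹ * 2⁻¹ := by
    rw [show (4 : ZMod p) = 2 * 2 by norm_num, mul_inv]
  -- reindexing equivalence s ↦ (1+s) * 2⁻¹
  let e : ZMod p ≃ ZMod p :=
    (Equiv.addLeft (1 : ZMod p)).trans (Equiv.mulRight₀ (2 : ZMod p)⁻¹ (inv_ne_zero h2))
  have step1 : jacobiSum Ψ Ψ = Ψ ((4 : ZMod p)⁻¹) * ∑ s : ZMod p, Ψ (1 - s ^ 2) := by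
    have : jacobiSum Ψ Ψ = ∑ s : ZMod p, Ψ (e s) * Ψ (1 - e s) :=
      (Equiv.sum_comp e (fun x => Ψ x * Ψ (1 - x))).symm
    rw [this, mul_sum]
    refine Finset.sum_congr rfl fun s _ => ?_
    have he : e s = (1 + s) * 2⁻¹ := rfl
    have h1e : 1 - e s = (1 - s) * 2⁻¹ := by
      rw [he]
      field_simp
      ring
    rw [h1e, he, ← map_mul]
    have harg : (1 + s) * 2⁻¹ * ((1 - s) * 2⁻¹) = (4 : ZMod p)⁻¹ * (1 - s ^ 2) := by
      rw [h4']
      ring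
    rw [harg, map_mul]
  have step2 : ∑ s : ZMod p, Ψ (1 - s ^ 2) = jacobiSum Φ Ψ := by
    have hfib := Finset.sum_fiberwise_eq_sum_filter (univ : Finset (ZMod p)) (univ : Finset (ZMod p))
      (fun s => s ^ 2) (fun s => Ψ (1 - s ^ 2))
    simp only [Finset.mem_univ, Finset.filter_true] at hfib
    rw [← hfib]
    have hinner : ∀ a : ZMod p,
        (∑ s ∈ univ.filter (fun s : ZMod p => s ^ 2 = a), Ψ (1 - s ^ 2))
          = (Φ a + 1) * Ψ (1 - a) := by
      intro a
      have hc : ((univ.filter (fun s : ZMod p => s ^ 2 = a)).card : ℂ) = Φ a + 1 := by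
        have hq := quadraticChar_card_sqrts hF2 a
        rw [Set.toFinset_setOf] at hq
        have : (((univ.filter (fun s : ZMod p => s ^ 2 = a)).card : ℤ) : ℂ)
            = ((quadraticChar (ZMod p) a : ℤ) : ℂ) + 1 := by
          exact_mod_cast hq
        simpa [hΦdef, MulChar.ringHomComp_apply] using this
      calc (∑ s ∈ univ.filter (fun s : ZMod p => s ^ 2 = a), Ψ (1 - s ^ 2))
          = ∑ s ∈ univ.filter (fun s : ZMod p => s ^ 2 = a), Ψ (1 - a) := by
            refine Finset.sum_congr rfl fun s hs => ?_
            rw [Finset.mem_filter] at hs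
            rw [hs.2]
        _ = ((univ.filter (fun s : ZMod p => s ^ 2 = a)).card : ℂ) * Ψ (1 - a) := by
            rw [Finset.sum_const, nsmul_eq_mul]
        _ = (Φ a + 1) * Ψ (1 - a) := by rw [hc]
    rw [Finset.sum_congr rfl (fun a _ => hinner a)]
    have hsplit : ∑ a : ZMod p, (Φ a + 1) * Ψ (1 - a)
        = (∑ a : ZMod p, Φ a * Ψ (1 - a)) + ∑ a : ZMod p, Ψ (1 - a) := by
      rw [← Finset.sum_add_distrib]
      refine Finset.sum_congr rfl fun a _ => ?_
      ring
    rw [hsplit]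
    have hzero : ∑ a : ZMod p, Ψ (1 - a) = 0 := by
      have h := Equiv.sum_comp (Equiv.subLeft (1 : ZMod p)) (fun x => Ψ x)
      simp only [Equiv.subLeft_apply] at h
      rw [h]
      exact MulChar.sum_eq_zero_of_ne_one hΨ
    rw [hzero, add_zero]
    rfl
  rw [step1, step2]

end key

noncomputable def gsum (p : ℕ) [Fact p.Prime] (ζ : ℂ) (χ : MulChar (ZMod p) ℂ) : ℂ :=
  ∑ x : ZMod p, χ x * ζ ^ x.val

theorem hasse_davenport_m2 (p : ℕ) [Fact p.Prime] (hp : Odd p) (ζ : ℂ)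
    (hζ : IsPrimitiveRoot ζ p) (χ : MulChar (ZMod p) ℂ) :
    gsum p ζ ((quadraticChar (ZMod p)).ringHomComp (Int.castRingHom ℂ) * χ⁻¹) *
        gsum p ζ χ⁻¹ =
      gsum p ζ ((quadraticChar (ZMod p)).ringHomComp (Int.castRingHom ℂ)) *
        χ⁻¹ ((4 : ZMod p)⁻¹) * gsum p ζ (χ⁻¹ ^ 2) := by
  set Φ : MulChar (ZMod p) ℂ := (quadraticChar (ZMod p)).ringHomComp (Int.castRingHom ℂ) with hΦdef
  set Ψ : MulChar (ZMod p) ℂ := χ⁻¹ with hΨdef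
  have h2 : (2 : ZMod p) ≠ 0 := two_ne_zero_zmod hp
  have h4 : (4 : ZMod p) ≠ 0 := four_ne_zero_zmod hp
  have hF2 : ringChar (ZMod p) ≠ 2 := by
    rw [ZMod.ringChar_zmod_n]
    intro h
    subst h
    exact (Nat.not_odd_iff_even.mpr (by norm_num)) hp
  have hΦq : Φ.IsQuadratic := (quadraticChar_isQuadratic (ZMod p)).comp _
  have hΦ1 : Φ ≠ 1 := by
    intro h
    exact quadraticChar_ne_one hF2
      ((MulChar.ringHomComp_eq_one_iff (f := Int.castRingHom ℂ)
        (fun a b hab => by simpa using hab)).mp h)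
  -- the additive character
  set ψ : AddChar (ZMod p) ℂ := AddChar.zmodChar p hζ.pow_eq_one with hψdef
  have hψprim : ψ.IsPrimitive := AddChar.zmodChar_primitive_of_primitive_root p hζ
  have hgs : ∀ θ : MulChar (ZMod p) ℂ, gsum p ζ θ = gaussSum θ ψ := by
    intro θ
    simp [gsum, gaussSum, hψdef, AddChar.zmodChar_apply]
  rw [hgs, hgs, hgs, hgs]
  by_cases hΨ1 : Ψ = 1
  · rw [hΨ1, mul_one, one_pow]
    have : (1 : MulChar (ZMod p) ℂ) ((4 : ZMod p)⁻¹) = 1 :=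
      MulChar.one_apply (isUnit_iff_ne_zero.mpr (inv_ne_zero h4))
    rw [this]
    ring
  by_cases hΨΦ : Ψ = Φ
  · rw [hΨΦ]
    have hΦΦ : Φ * Φ = 1 := by rw [← pow_two]; exact hΦq.sq_eq_one
    have hΦ4 : Φ ((4 : ZMod p)⁻¹) = 1 := by
      have : ((4 : ZMod p)⁻¹) = ((2 : ZMod p)⁻¹) ^ 2 := by
        rw [show (4 : ZMod p) = 2 * 2 by norm_num, mul_inv, pow_two]
      rw [this, hΦdef, MulChar.ringHomComp_apply, quadraticChar_sq_one' (inv_ne_zero h2)]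
      norm_num
    rw [hΦΦ, hΦ4, pow_two, hΦΦ]
    ring
  -- main case
  have hΦΨ : Φ * Ψ ≠ 1 := by
    intro h
    apply hΨΦ
    have : Ψ = Φ⁻¹ := eq_inv_of_mul_eq_one_left (by rw [mul_comm]; exact h)
    rw [this, hΦq.inv]
  have hΨΨ : Ψ * Ψ ≠ 1 := by
    intro h
    -- use duality: characters form a group isomorphic to (ZMod p)ˣ
    haveI : NeZero (Monoid.exponent (ZMod p)ˣ) :=
      ⟨Monoid.exponent_ne_zero_of_finite⟩
    obtain ⟨e⟩ := MulChar.mulEquiv_units (ZMod p) ℂ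
    have hsq : ∀ {θ : MulChar (ZMod p) ℂ}, θ * θ = 1 → θ ≠ 1 → e θ = -1 := by
      intro θ hθ hθ1
      have h1 : (e θ) ^ 2 = 1 := by
        rw [pow_two, ← map_mul, hθ, map_one]
      have h2' : ((e θ : ZMod p) : ZMod p) ^ 2 = 1 := by
        have := congrArg (Units.val) h1
        push_cast at this
        exact_mod_cast this
      rcases sq_eq_one_iff.mp h2' with h | h
      · exfalso
        apply hθ1
        have : e θ = 1 := Units.ext (by simpa using h)
        have := congrArg e.symm this
        simpa using this
      · exact Units.ext (by simpa using h)
    have hΦΦ : Φ * Φ = 1 := by rw [← pow_two]; exact hΦq.sq_eq_one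
    have : e Ψ = e Φ := by rw [hsq h hΨ1, hsq hΦΦ hΦ1]
    exact hΨΦ (e.injective this)
  have hcard : ((Fintype.card (ZMod p) : ℂ)) ≠ 0 := by
    rw [ZMod.card]
    exact_mod_cast (Fact.out : p.Prime).ne_zero
  have hBne : gaussSum Ψ ψ ≠ 0 := gaussSum_ne_zero_of_nontrivial hcard hΨ1 hψprim
  have eq1 : gaussSum (Φ * Ψ) ψ * jacobiSum Φ Ψ = gaussSum Φ ψ * gaussSum Ψ ψ :=
    jacobiSum_mul_nontrivial hΦΨ ψ
  have eq2 : gaussSum (Ψ * Ψ) ψ * jacobiSum Ψ Ψ = gaussSum Ψ ψ * gaussSum Ψ ψ :=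
    jacobiSum_mul_nontrivial hΨΨ ψ
  have key : jacobiSum Ψ Ψ = Ψ ((4 : ZMod p)⁻¹) * jacobiSum Φ Ψ := jacobiSum_self_eq hp hΨ1
  have hpow : Ψ ^ 2 = Ψ * Ψ := by rw [pow_two]
  rw [hpow]
  apply mul_right_cancel₀ hBne
  linear_combination (-(gaussSum (Φ * Ψ) ψ)) * eq2
    + gaussSum (Φ * Ψ) ψ * gaussSum (Ψ * Ψ) ψ * key
    + Ψ ((4 : ZMod p)⁻¹) * gaussSum (Ψ * Ψ) ψ * eq1
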